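/- If A is a nonnegative bounded linear operator on L²(X) whose kernel contains a nonzero nonnegative function h, then A vanishes on L²(Supp h); in particular, if moreover μ((Supp h)ᶜ) > 0, then A is decomposable. -/

import Mathlib

open MeasureTheory Filter Set Topology

theorem stmt18 {X : Type*} [MeasurableSpace X] (μ : Measure X) [IsFiniteMeasure μ]
    (A : Lp ℝ 2 μ →L[ℝ] Lp ℝ 2 μ)
    (hpos : ∀ f : Lp ℝ 2 μ, 0 ≤ f → 0 ≤ A f)
    (h : Lp ℝ 2 μ) (hker : A h = 0) (h0 : 0 ≤ h) (hne : h ≠ 0) :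
    (∀ f : Lp ℝ 2 μ,
        (∀ᵐ x ∂μ, x ∉ Function.support (h : X → ℝ) → f x = 0) → A f = 0) ∧
    (0 < μ (Function.support (h : X → ℝ))ᶜ →
      ∃ U : Set X, ∃ hU : MeasurableSet U, 0 < μ U ∧ 0 < μ Uᶜ ∧
        (inner ℝ (A (indicatorConstLp 2 hU (measure_ne_top μ U) (1 : ℝ)))
          (indicatorConstLp 2 hU.compl (measure_ne_top μ Uᶜ) (1 : ℝ)) : ℝ) = 0) := by
  have hhm : Measurable (h : X → ℝ) := (Lp.stronglyMeasurable h).measurable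
  have h0ae : 0 ≤ᵐ[μ] (h : X → ℝ) := (Lp.coeFn_nonneg h).mpr h0
  have key : ∀ f : Lp ℝ 2 μ,
      (∀ᵐ x ∂μ, x ∉ Function.support (h : X → ℝ) → f x = 0) → A f = 0 := by
    intro f hf
    have hfm : Measurable (f : X → ℝ) := (Lp.stronglyMeasurable f).measurable
    set S : ℕ → Set X := fun n => {x | 1 ≤ (n : ℝ) * (h : X → ℝ) x ∧ |(f : X → ℝ) x| ≤ n}
      with hS
    have hSm : ∀ n, MeasurableSet (S n) := by
      intro n
      exact (measurableSet_le measurable_const (measurable_const.mul hhm)).inter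
        (measurableSet_le hfm.abs measurable_const)
    set g : ℕ → X → ℝ := fun n => (S n).indicator (f : X → ℝ) with hgdef
    have hgsm : ∀ n, StronglyMeasurable (g n) :=
      fun n => (Lp.stronglyMeasurable f).indicator (hSm n)
    have hgmem : ∀ n, MemLp (g n) 2 μ := by
      intro n
      refine MemLp.of_le (Lp.memLp f) (hgsm n).aestronglyMeasurable
        (Eventually.of_forall fun x => ?_)
      exact norm_indicator_le_norm_self _ _
    set G : ℕ → Lp ℝ 2 μ := fun n => (hgmem n).toLp (g n) with hGdef
    -- pointwise bound |g n| ≤ n^2 * h  (a.e.)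
    have hbound : ∀ n, ∀ᵐ x ∂μ, |g n x| ≤ (n : ℝ) ^ 2 * (h : X → ℝ) x := by
      intro n
      filter_upwards [h0ae] with x hx0
      by_cases hxS : x ∈ S n
      · rw [hgdef]
        simp only [Set.indicator_of_mem hxS]
        obtain ⟨h1, h2⟩ := hxS
        have hn0 : (0 : ℝ) ≤ n := Nat.cast_nonneg n
        calc |(f : X → ℝ) x| ≤ n := h2
          _ = (n : ℝ) * 1 := by ring
          _ ≤ (n : ℝ) * ((n : ℝ) * (h : X → ℝ) x) := by
              exact mul_le_mul_of_nonneg_left h1 hn0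
          _ = (n : ℝ) ^ 2 * (h : X → ℝ) x := by ring
      · rw [hgdef]
        simp only [Set.indicator_of_notMem hxS, abs_zero]
        have hx0' : (0:ℝ) ≤ (h : X → ℝ) x := hx0
        exact mul_nonneg (sq_nonneg _) hx0'
    have hAG : ∀ n, A (G n) = 0 := by
      intro n
      have hle1 : G n ≤ ((n : ℝ) ^ 2) • h := by
        rw [← Lp.coeFn_le]
        filter_upwards [MemLp.coeFn_toLp (hgmem n), Lp.coeFn_smul ((n : ℝ) ^ 2) h,
          hbound n] with x hx1 hx2 hx3
        rw [hx1, hx2]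
        exact le_trans (le_abs_self _) hx3
      have hle2 : -(((n : ℝ) ^ 2) • h) ≤ G n := by
        rw [← Lp.coeFn_le]
        filter_upwards [MemLp.coeFn_toLp (hgmem n), Lp.coeFn_neg (((n : ℝ) ^ 2) • h),
          Lp.coeFn_smul ((n : ℝ) ^ 2) h, hbound n] with x hx1 hx2 hx3 hx4
        rw [hx1, hx2]
        simp only [Pi.neg_apply, hx3, Pi.smul_apply, smul_eq_mul]
        exact neg_le_of_abs_le hx4
      have hA1 : 0 ≤ A (((n : ℝ) ^ 2) • h - G n) := hpos _ (sub_nonneg.mpr hle1)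
      have hA2 : 0 ≤ A (G n - -(((n : ℝ) ^ 2) • h)) := hpos _ (sub_nonneg.mpr hle2)
      rw [map_sub, _root_.map_smul, hker, smul_zero, zero_sub] at hA1
      rw [map_sub, map_neg, _root_.map_smul, hker, smul_zero, neg_zero, sub_zero] at hA2
      exact le_antisymm (neg_nonneg.mp hA1) hA2
    -- pointwise convergence g n → f
    have hptw : ∀ᵐ x ∂μ, Tendsto (fun n => g n x) atTop (𝓝 ((f : X → ℝ) x)) := by
      filter_upwards [h0ae, hf] with x hx0 hxf
      by_cases hfx : (f : X → ℝ) x = 0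
      · have : ∀ n, g n x = (f : X → ℝ) x := by
          intro n
          rw [hgdef]
          by_cases hxS : x ∈ S n
          · simp [Set.indicator_of_mem hxS]
          · simp [Set.indicator_of_notMem hxS, hfx]
        exact Tendsto.congr (fun n => (this n).symm) tendsto_const_nhds
      · have hxsupp : x ∈ Function.support (h : X → ℝ) := by
          by_contra hc
          exact hfx (hxf hc)
        have hhx : 0 < (h : X → ℝ) x := lt_of_le_of_ne hx0 (Ne.symm hxsupp)
        obtain ⟨N, hN⟩ := exists_nat_ge (max (1 / (h : X → ℝ) x) |(f : X → ℝ) x|)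
        have hev : ∀ n ≥ N, g n x = (f : X → ℝ) x := by
          intro n hn
          have hnN : (N : ℝ) ≤ n := Nat.cast_le.mpr hn
          have hxS : x ∈ S n := by
            constructor
            · have h1 : 1 / (h : X → ℝ) x ≤ (n : ℝ) :=
                le_trans (le_trans (le_max_left _ _) hN) hnN
              rw [div_le_iff₀ hhx] at h1
              linarith [h1]
            · exact le_trans (le_trans (le_max_right _ _) hN) hnN
          rw [hgdef]
          simp [Set.indicator_of_mem hxS]
        refine Tendsto.congr' ?_ tendsto_const_nhds
        filter_upwards [eventually_ge_atTop N] with n hn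
        exact (hev n hn).symm
    -- uniform integrability of g
    have hui : UnifIntegrable g 2 μ := by
      intro ε hε
      obtain ⟨δ, hδ, hδ'⟩ := (Lp.memLp f).eLpNorm_indicator_le one_le_two ENNReal.ofNat_ne_top hε
      refine ⟨δ, hδ, fun n s hs hμs => ?_⟩
      rw [hgdef, Set.indicator_indicator]
      exact hδ' _ (hs.inter (hSm n)) (le_trans (measure_mono Set.inter_subset_left) hμs)
    have htend : Tendsto (fun n => eLpNorm (g n - (f : X → ℝ)) 2 μ) atTop (𝓝 0) :=
      tendsto_Lp_finite_of_tendsto_ae_of_meas one_le_two ENNReal.ofNat_ne_top hgsm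
        (Lp.stronglyMeasurable f) (Lp.memLp f) hui hptw
    have htendLp : Tendsto G atTop (𝓝 f) := by
      rw [Lp.tendsto_Lp_iff_tendsto_eLpNorm']
      refine htend.congr fun n => ?_
      refine eLpNorm_congr_ae ?_
      filter_upwards [MemLp.coeFn_toLp (hgmem n)] with x hx
      simp [hx.symm, hGdef]
    have hAf : Tendsto (fun n => A (G n)) atTop (𝓝 (A f)) :=
      (A.continuous.tendsto f).comp htendLp
    have : Tendsto (fun n => A (G n)) atTop (𝓝 (0 : Lp ℝ 2 μ)) := by
      exact Tendsto.congr (fun n => (hAG n).symm) tendsto_const_nhds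
    exact tendsto_nhds_unique hAf this
  refine ⟨key, fun hcompl => ?_⟩
  set U : Set X := Function.support (h : X → ℝ) with hUdef
  have hUm : MeasurableSet U := measurableSet_support hhm
  have hU0 : 0 < μ U := by
    rcases eq_zero_or_pos (μ U) with h0' | h0'
    · exfalso
      apply hne
      rw [Lp.eq_zero_iff_ae_eq_zero]
      have : ∀ᵐ x ∂μ, x ∉ U := by
        rw [ae_iff]
        simpa using h0'
      filter_upwards [this] with x hx
      exact Function.notMem_support.mp hx
    · exact h0'
  refine ⟨U, hUm, hU0, hcompl, ?_⟩
  have hAU : A (indicatorConstLp 2 hUm (measure_ne_top μ U) (1 : ℝ)) = 0 := by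
    apply key
    filter_upwards [indicatorConstLp_coeFn (p := 2) (hs := hUm)
      (hμs := measure_ne_top μ U) (c := (1 : ℝ))] with x hx hxU
    rw [hx, Set.indicator_of_notMem hxU]
  rw [hAU, inner_zero_left]
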